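/- arXiv:2203.12158 — 3 statements merged into one kernel-verified Lean document; each statement's English description precedes it below -/
import Mathlib

section
/- Let G be a group acting on a set X and let Y ⊆ X be a subset that is both G-invariant and Aut_G(X)-invariant (i.e., τ(y) ∈ Y for all y ∈ Y and τ ∈ Aut_G(X)). Then Aut_G(Y) is isomorphic to a normal subgroup of Aut_G(X); specifically, the image of Aut_G(Y) under the embedding that extends each τ ∈ Aut_G(Y) by the identity on X \ Y is a normal subgroup of Aut_G(X). -/
/-- The monoid of all `G`-equivariant transformations of `X`, as a submonoid of
`Function.End X` (composition of functions). -/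
def gEnd (G X : Type*) [Group G] [MulAction G X] : Submonoid (Function.End X) where
  carrier := {f | ∀ (g : G) (x : X), f (g • x) = g • f x}
  one_mem' := fun _ _ => rfl
  mul_mem' := fun {f₁ f₂} h₁ h₂ g x => by
    show f₁ (f₂ (g • x)) = g • f₁ (f₂ x)
    rw [h₂, h₁]

/-- The group of all bijective `G`-equivariant transformations of `X`, as a subgroup of
`Equiv.Perm X`. -/
def gAut (G X : Type*) [Group G] [MulAction G X] : Subgroup (Equiv.Perm X) where
  carrier := {f | ∀ (g : G) (x : X), f (g • x) = g • f x}
  one_mem' := fun _ _ => rfl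
  mul_mem' := fun {f₁ f₂} h₁ h₂ g x => by
    show f₁ (f₂ (g • x)) = g • f₁ (f₂ x)
    rw [h₂, h₁]
  inv_mem' := fun {f} hf g x => f.injective (by
    rw [show ∀ y, f (f⁻¹ y) = y from fun y => f.apply_symm_apply y, hf,
      show ∀ y, f (f⁻¹ y) = y from fun y => f.apply_symm_apply y])

open Classical in
/-- If `Y ⊆ X` is `G`-invariant and `Aut_G(X)`-invariant, then the image
of `Aut_G(Y)` in `Aut_G(X)` under the extension-by-identity embedding is a normal subgroup. -/
theorem stmt1 {G X : Type*} [Group G] [MulAction G X] (Y : SubMulAction G X)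
    (hY : ∀ τ : Equiv.Perm X, τ ∈ gAut G X → ∀ y : X, y ∈ Y → τ y ∈ Y) :
    ∃ Ψ : gAut G ↑Y →* gAut G X,
      Function.Injective Ψ ∧
      (∀ σ : gAut G ↑Y,
        (∀ y : ↑Y, (↑(Ψ σ) : Equiv.Perm X) ↑y = ↑((↑σ : Equiv.Perm ↑Y) y)) ∧
        (∀ x : X, x ∉ Y → (↑(Ψ σ) : Equiv.Perm X) x = x)) ∧
      Ψ.range.Normal := by
  classical
  -- equivariance of the extension
  have mem_ext : ∀ σ : gAut G ↑Y, Equiv.Perm.ofSubtype (σ : Equiv.Perm ↑Y) ∈ gAut G X := by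
    intro σ g x
    by_cases hx : x ∈ Y
    · have hgx : g • x ∈ Y := Y.smul_mem g hx
      rw [Equiv.Perm.ofSubtype_apply_of_mem _ hgx, Equiv.Perm.ofSubtype_apply_of_mem _ hx]
      have := σ.2 g ⟨x, hx⟩
      have h2 : (σ : Equiv.Perm ↑Y) (⟨g • x, hgx⟩ : ↑Y) = g • (σ : Equiv.Perm ↑Y) ⟨x, hx⟩ := this
      calc (((σ : Equiv.Perm ↑Y) ⟨g • x, hgx⟩ : ↑Y) : X)
          = ((g • (σ : Equiv.Perm ↑Y) ⟨x, hx⟩ : ↑Y) : X) := by rw [h2]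
        _ = g • (((σ : Equiv.Perm ↑Y) ⟨x, hx⟩ : ↑Y) : X) := rfl
    · have hgx : g • x ∉ Y := fun h => hx (by
        have := Y.smul_mem g⁻¹ h
        rwa [inv_smul_smul] at this)
      rw [Equiv.Perm.ofSubtype_apply_of_not_mem _ hgx,
        Equiv.Perm.ofSubtype_apply_of_not_mem _ hx]
  refine ⟨{
      toFun := fun σ => ⟨Equiv.Perm.ofSubtype (σ : Equiv.Perm ↑Y), mem_ext σ⟩
      map_one' := by ext x; simp
      map_mul' := by intro σ₁ σ₂; ext x; simp }, ?_, ?_, ?_⟩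
  · intro σ₁ σ₂ h
    have h' : Equiv.Perm.ofSubtype (σ₁ : Equiv.Perm ↑Y)
        = Equiv.Perm.ofSubtype (σ₂ : Equiv.Perm ↑Y) := congrArg Subtype.val h
    ext y
    have := congrFun (congrArg (⇑) h') (y : X)
    rw [Equiv.Perm.ofSubtype_apply_of_mem _ y.2, Equiv.Perm.ofSubtype_apply_of_mem _ y.2] at this
    exact this
  · intro σ
    constructor
    · intro y
      simp [Equiv.Perm.ofSubtype_apply_of_mem _ y.2]
    · intro x hx
      simp [Equiv.Perm.ofSubtype_apply_of_not_mem _ hx]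
  · constructor
    intro n hn τ
    obtain ⟨σ, hσ⟩ := hn
    -- τ and τ⁻¹ preserve Y
    have hτY : ∀ x : X, x ∈ Y → (τ : Equiv.Perm X) x ∈ Y := hY τ τ.2
    have hτY' : ∀ x : X, x ∈ Y → (τ : Equiv.Perm X)⁻¹ x ∈ Y := hY _ (τ⁻¹).2
    have hconj_mem : ∀ x : X, x ∈ Y ↔
        ((τ : Equiv.Perm X) * Equiv.Perm.ofSubtype (σ : Equiv.Perm ↑Y) * (τ : Equiv.Perm X)⁻¹) x ∈ Y := by
      intro x
      constructor
      · intro hx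
        exact hτY _ (hY _ (mem_ext σ) _ (hτY' x hx))
      · intro hx
        by_contra hx'
        have h1 : (τ : Equiv.Perm X)⁻¹ x ∉ Y := fun h => hx' (by
          have := hτY _ h; simpa using this)
        have : ((τ : Equiv.Perm X) * Equiv.Perm.ofSubtype (σ : Equiv.Perm ↑Y)
            * (τ : Equiv.Perm X)⁻¹) x = x := by
          simp [Equiv.Perm.mul_apply, Equiv.Perm.ofSubtype_apply_of_not_mem _ (show (τ : Equiv.Perm X).symm x ∉ Y from h1)]
        rw [this] at hx
        exact hx' hx
    set c : Equiv.Perm X :=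
      (τ : Equiv.Perm X) * Equiv.Perm.ofSubtype (σ : Equiv.Perm ↑Y) * (τ : Equiv.Perm X)⁻¹
      with hc
    have hc_mem : c ∈ gAut G X :=
      mul_mem (mul_mem τ.2 (mem_ext σ)) (τ⁻¹).2
    -- the restriction of c to Y
    set σ' : Equiv.Perm ↑Y := c.subtypePerm (fun x => (hconj_mem x).symm) with hσ'
    have hσ'_mem : σ' ∈ gAut G ↑Y := by
      intro g y
      apply Subtype.ext
      show c ((g • y : ↑Y) : X) = ((g • σ' y : ↑Y) : X)
      have : ((g • y : ↑Y) : X) = g • (y : X) := rfl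
      rw [this, hc_mem g (y : X)]
      rfl
    refine ⟨⟨σ', hσ'_mem⟩, ?_⟩
    apply Subtype.ext
    show Equiv.Perm.ofSubtype σ' = (τ : Equiv.Perm X) * ↑n * (τ : Equiv.Perm X)⁻¹
    have hn' : (n : Equiv.Perm X) = Equiv.Perm.ofSubtype (σ : Equiv.Perm ↑Y) :=
      (congrArg Subtype.val hσ).symm
    rw [hn', ← hc]
    ext x
    by_cases hx : x ∈ Y
    · rw [Equiv.Perm.ofSubtype_apply_of_mem _ hx]
      rfl
    · rw [Equiv.Perm.ofSubtype_apply_of_not_mem _ hx]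
      have h1 : (τ : Equiv.Perm X)⁻¹ x ∉ Y := fun h => hx (by
        have := hτY _ h; simpa using this)
      simp [hc, Equiv.Perm.mul_apply, Equiv.Perm.ofSubtype_apply_of_not_mem _ (show (τ : Equiv.Perm X).symm x ∉ Y from h1)]
end

section
/- Let G be a group acting on a set X and let H = G_x be the stabilizer of some point x ∈ X. Let B_[H] = {y ∈ X : G_y is conjugate to H in G} and let O_[H] be the set of G-orbits contained in B_[H]. Then Aut_G(B_[H]) is isomorphic to the unrestricted wreath product (N_G(H)/H) ≀ Sym(O_[H]), i.e., the semidirect product of the direct product of copies of N_G(H)/H indexed by O_[H] with the symmetric group Sym(O_[H]) acting by permuting coordinates. -/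
/-- The conjugate subgroup `g K g⁻¹`. -/
def conjSub {G : Type*} [Group G] (g : G) (K : Subgroup G) : Subgroup G :=
  Subgroup.map (MulAut.conj g).toMonoidHom K

/-- The set `O_[H]` of `G`-orbits of `X` whose point stabilizers are conjugate to `H`. -/
def classOrbits (G X : Type*) [Group G] [MulAction G X] (H : Subgroup G) : Set (Set X) :=
  {s | ∃ y : X, (∃ g : G, MulAction.stabilizer G y = conjSub g H) ∧ s = MulAction.orbit G y}

/-- The quotient `N_G(H)/H` of the normalizer of `H` by `H`. -/
abbrev normQuot {G : Type*} [Group G] (H : Subgroup G) :=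
  Subgroup.normalizer (H : Set G) ⧸ H.subgroupOf (Subgroup.normalizer (H : Set G))

/-- The action of `Sym(Δ)` on `K^Δ` permuting the coordinates, as a homomorphism
into the automorphism group of the direct product `K^Δ`; it is used to form the
unrestricted wreath product `K ≀ Sym(Δ) = K^Δ ⋊ Sym(Δ)`. -/
def permCoordAut (K Δ : Type*) [Group K] : Equiv.Perm Δ →* MulAut (Δ → K) where
  toFun σ :=
    { toFun := fun f => f ∘ σ.symm
      invFun := fun f => f ∘ σ
      left_inv := fun f => by funext δ; simp
      right_inv := fun f => by funext δ; simp
      map_mul' := fun f g => rfl }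
  map_one' := by ext f δ; rfl
  map_mul' := fun σ τ => by ext f δ; rfl


open MulAction

section
variable {G : Type*} [Group G]

lemma mem_conjSub {g n : G} {K : Subgroup G} : n ∈ conjSub g K ↔ g⁻¹ * n * g ∈ K := by
  rw [conjSub, Subgroup.mem_map_equiv, MulAut.conj_symm_apply]

/-- right multiplication by `n⁻¹` on `G ⧸ H`, for `n` in the normalizer. -/
def rmul (H : Subgroup G) (n : (Subgroup.normalizer (H : Set G))) : Equiv.Perm (G ⧸ H) where
  toFun := Quotient.map' (· * (n : G)⁻¹) (fun a b hab => by
    rw [QuotientGroup.leftRel_apply] at *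
    have h := (Subgroup.mem_normalizer_iff.mp n.2 (a⁻¹ * b)).mp hab
    convert h using 1; group)
  invFun := Quotient.map' (· * (n : G)) (fun a b hab => by
    rw [QuotientGroup.leftRel_apply] at *
    have h := (Subgroup.mem_normalizer_iff.mp n.2 ((n:G)⁻¹ * (a⁻¹*b) * (n:G))).mpr (by
      convert hab using 1; group)
    convert h using 1; group)
  left_inv := fun c => by
    induction c using QuotientGroup.induction_on
    simp [Quotient.map'_mk'']
  right_inv := fun c => by
    induction c using QuotientGroup.induction_on
    simp [Quotient.map'_mk'']

lemma rmul_mk (H : Subgroup G) (n : (Subgroup.normalizer (H : Set G))) (g : G) :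
    rmul H n (QuotientGroup.mk g) = QuotientGroup.mk (g * (n:G)⁻¹) := rfl

def rho0 (H : Subgroup G) : (Subgroup.normalizer (H : Set G)) →* Equiv.Perm (G ⧸ H) where
  toFun := rmul H
  map_one' := by ext c; induction c using QuotientGroup.induction_on; simp [rmul_mk]
  map_mul' := fun n m => by
    ext c; induction c using QuotientGroup.induction_on
    simp [rmul_mk, mul_assoc]

def rho (H : Subgroup G) : normQuot H →* Equiv.Perm (G ⧸ H) :=
  QuotientGroup.lift (H.subgroupOf (Subgroup.normalizer (H : Set G))) (rho0 H) (fun n hn => by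
    ext c; induction c using QuotientGroup.induction_on with
    | H g =>
      show rmul H n _ = _
      rw [rmul_mk]
      simp only [Equiv.Perm.coe_one, id_eq]
      rw [QuotientGroup.eq]
      have : (n:G)⁻¹ ∈ H := inv_mem hn
      group
      simpa using this)

lemma rho_mk (H : Subgroup G) (n : (Subgroup.normalizer (H : Set G))) (g : G) :
    rho H (QuotientGroup.mk n) (QuotientGroup.mk g) = QuotientGroup.mk (g * (n:G)⁻¹) := rfl

lemma rho_equivariant (H : Subgroup G) (q : normQuot H) (g : G) (c : G ⧸ H) :
    rho H q (g • c) = g • rho H q c := by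
  induction q using QuotientGroup.induction_on with
  | H n =>
  induction c using QuotientGroup.induction_on with
  | H a =>
  rw [MulAction.Quotient.smul_mk, rho_mk, rho_mk, MulAction.Quotient.smul_mk]
  congr 1
  simp [smul_eq_mul, mul_assoc]

lemma rho_eq_one (H : Subgroup G) (q : normQuot H) (hq : rho H q = 1) : q = 1 := by
  induction q using QuotientGroup.induction_on with
  | H n =>
    have := congrArg (fun t : Equiv.Perm (G ⧸ H) => t (QuotientGroup.mk 1)) hq
    simp only [rho_mk, Equiv.Perm.coe_one, id_eq, one_mul] at this
    rw [QuotientGroup.eq] at this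
    simp only [inv_inv, one_mul] at this
    rw [QuotientGroup.eq_one_iff]
    simpa [Subgroup.mem_subgroupOf] using this
end

section
variable {G : Type*} [Group G]

instance slicesAction (G : Type*) [Group G] (H : Subgroup G) (I : Type*) :
    MulAction G (I × (G ⧸ H)) where
  smul g p := (p.1, g • p.2)
  one_smul p := by show (p.1, (1:G) • p.2) = p; rw [one_smul]
  mul_smul g h p := by
    show (p.1, (g * h) • p.2) = (p.1, g • h • p.2)
    rw [mul_smul]

lemma slices_smul {H : Subgroup G} {I : Type*} (g : G) (p : I × (G ⧸ H)) :
    g • p = (p.1, g • p.2) := rfl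

def bigPerm (H : Subgroup G) (I : Type*) (f : I → normQuot H) (σ : Equiv.Perm I) :
    Equiv.Perm (I × (G ⧸ H)) where
  toFun p := (σ p.1, rho H (f (σ p.1)) p.2)
  invFun p := (σ.symm p.1, (rho H (f p.1)).symm p.2)
  left_inv p := by simp
  right_inv p := by simp

def bigHom (H : Subgroup G) (I : Type*) :
    ((I → normQuot H) ⋊[permCoordAut (normQuot H) I] Equiv.Perm I) →* gAut G (I × (G ⧸ H)) where
  toFun w := ⟨bigPerm H I w.left w.right,
    fun g p => Prod.ext rfl (rho_equivariant H _ g p.2)⟩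
  map_one' := by
    refine Subtype.ext (Equiv.ext fun p => ?_)
    refine Prod.ext rfl ?_
    show rho H (1 : normQuot H) p.2 = p.2
    rw [map_one]
    rfl
  map_mul' := fun w₁ w₂ => by
    refine Subtype.ext (Equiv.ext fun p => ?_)
    refine Prod.ext rfl ?_
    show rho H ((w₁.left * (permCoordAut (normQuot H) I w₁.right) w₂.left)
        (w₁.right (w₂.right p.1))) p.2
      = rho H (w₁.left (w₁.right (w₂.right p.1))) (rho H (w₂.left (w₂.right p.1)) p.2)
    rw [Pi.mul_apply, map_mul, Equiv.Perm.mul_apply]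
    have h : (permCoordAut (normQuot H) I w₁.right) w₂.left (w₁.right (w₂.right p.1))
        = w₂.left (w₂.right p.1) := by
      show w₂.left (w₁.right.symm (w₁.right (w₂.right p.1))) = _
      rw [Equiv.symm_apply_apply]
    rw [h]
end

section
variable {G : Type*} [Group G]

lemma bigHom_injective (H : Subgroup G) (I : Type*) : Function.Injective (bigHom H I) := by
  rw [injective_iff_map_eq_one]
  intro w hw
  have hperm : ∀ p : I × (G ⧸ H), bigPerm H I w.left w.right p = p := fun p =>
    congrArg (fun t : gAut G (I × (G ⧸ H)) => (t : Equiv.Perm (I × (G ⧸ H))) p) hw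
  have hright : w.right = 1 := by
    ext i
    exact congrArg Prod.fst (hperm (i, QuotientGroup.mk 1))
  have hleft : w.left = 1 := by
    funext i
    refine rho_eq_one H _ (Equiv.ext fun c => ?_)
    have := congrArg Prod.snd (hperm (w.right.symm i, c))
    simpa [bigPerm, Equiv.apply_symm_apply] using this
  ext
  · rw [hleft]; rfl
  · rw [hright]; rfl

lemma aux_fst {H : Subgroup G} {I : Type*} (τ : Equiv.Perm (I × (G ⧸ H)))
    (hτ : ∀ (g : G) (p : I × (G ⧸ H)), τ (g • p) = g • τ p) (i : I) :
    (τ ((τ.symm (i, QuotientGroup.mk 1)).1, QuotientGroup.mk 1)).1 = i := by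
  set p := τ.symm (i, QuotientGroup.mk 1) with hp
  obtain ⟨a, ha⟩ : ∃ a : G, QuotientGroup.mk a = p.2 := ⟨Quotient.out p.2, QuotientGroup.out_eq' _⟩
  have h1 : (p.1, (QuotientGroup.mk 1 : G ⧸ H)) = a⁻¹ • p := by
    refine Prod.ext rfl ?_
    show (QuotientGroup.mk 1 : G ⧸ H) = a⁻¹ • p.2
    rw [← ha, MulAction.Quotient.smul_mk]
    congr 1
    simp
  rw [h1, hτ]
  have h2 : τ p = (i, QuotientGroup.mk 1) := τ.apply_symm_apply _
  rw [h2]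
  rfl

lemma bigHom_surjective (H : Subgroup G) (I : Type*) : Function.Surjective (bigHom H I) := by
  rintro ⟨τ, hτ⟩
  have hτ' : ∀ (g : G) (p : I × (G ⧸ H)), τ.symm (g • p) = g • τ.symm p :=
    (gAut G (I × (G ⧸ H))).inv_mem hτ
  -- the permutation of slices
  let σ : Equiv.Perm I :=
    { toFun := fun i => (τ (i, QuotientGroup.mk 1)).1
      invFun := fun i => (τ.symm (i, QuotientGroup.mk 1)).1
      left_inv := fun i => by
        have := aux_fst τ.symm hτ' i
        rwa [Equiv.symm_symm] at this
      right_inv := fun i => aux_fst τ hτ i }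
  -- the chosen group elements
  let gs : I → G := fun i => Quotient.out (τ (i, QuotientGroup.mk 1)).2
  have hgs : ∀ i, QuotientGroup.mk (gs i) = (τ (i, QuotientGroup.mk 1)).2 := fun i =>
    QuotientGroup.out_eq' _
  have factA : ∀ i, τ (i, QuotientGroup.mk 1) = (σ i, QuotientGroup.mk (gs i)) := fun i =>
    Prod.ext rfl (hgs i).symm
  have factA' : ∀ (i : I) (a : G),
      τ (i, QuotientGroup.mk a) = (σ i, QuotientGroup.mk (a * gs i)) := by
    intro i a
    have h1 : (i, (QuotientGroup.mk a : G ⧸ H)) = a • (i, (QuotientGroup.mk 1 : G ⧸ H)) := by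
      refine Prod.ext rfl ?_
      show (QuotientGroup.mk a : G ⧸ H) = a • QuotientGroup.mk 1
      rw [MulAction.Quotient.smul_mk]
      congr 1
      simp
    rw [h1, hτ, factA]
    refine Prod.ext rfl ?_
    show a • QuotientGroup.mk (gs i) = (QuotientGroup.mk (a * gs i) : G ⧸ H)
    rw [MulAction.Quotient.smul_mk]
    rfl
  have factB : ∀ i, τ.symm (σ i, QuotientGroup.mk 1) = (i, QuotientGroup.mk (gs i)⁻¹) := by
    intro i
    have h1 : ((σ i : I), (QuotientGroup.mk 1 : G ⧸ H))
        = (gs i)⁻¹ • (σ i, QuotientGroup.mk (gs i)) := by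
      refine Prod.ext rfl ?_
      show (QuotientGroup.mk 1 : G ⧸ H) = (gs i)⁻¹ • QuotientGroup.mk (gs i)
      rw [MulAction.Quotient.smul_mk]
      congr 1
      simp
    rw [h1, ← factA i, hτ', τ.symm_apply_apply]
    refine Prod.ext rfl ?_
    show (gs i)⁻¹ • (QuotientGroup.mk 1 : G ⧸ H) = QuotientGroup.mk (gs i)⁻¹
    rw [MulAction.Quotient.smul_mk]
    congr 1
    simp
  have hmemH : ∀ (i : I) (h : G), h ∈ H → QuotientGroup.mk h = (QuotientGroup.mk 1 : G ⧸ H) := by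
    intro i h hh
    rw [QuotientGroup.eq]
    simpa using inv_mem hh
  have hnorm : ∀ i, gs i ∈ (Subgroup.normalizer (H : Set G)) := by
    intro i
    rw [Subgroup.mem_normalizer_iff]
    intro h
    constructor
    · intro hh
      -- use factB and equivariance of τ.symm under h
      have e1 : (h : G) • ((σ i : I), (QuotientGroup.mk 1 : G ⧸ H)) = (σ i, QuotientGroup.mk 1) := by
        refine Prod.ext rfl ?_
        show h • (QuotientGroup.mk 1 : G ⧸ H) = QuotientGroup.mk 1
        rw [MulAction.Quotient.smul_mk]
        exact hmemH i _ (by simpa using hh)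
      have e2 := hτ' h (σ i, QuotientGroup.mk 1)
      rw [e1, factB i] at e2
      have e3 := congrArg Prod.snd e2
      have e4 : (QuotientGroup.mk (gs i)⁻¹ : G ⧸ H) = QuotientGroup.mk (h * (gs i)⁻¹) := by
        have e5 := e3
        rw [slices_smul, MulAction.Quotient.smul_mk, smul_eq_mul] at e5
        exact e5
      rw [QuotientGroup.eq] at e4
      convert e4 using 1
      group
    · intro hh
      -- use factA and equivariance of τ under h' := g h g⁻¹
      have key : ∀ h' ∈ H, (gs i)⁻¹ * h' * gs i ∈ H := by
        intro h' hh'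
        have e1 : (h' : G) • ((i : I), (QuotientGroup.mk 1 : G ⧸ H)) = (i, QuotientGroup.mk 1) := by
          refine Prod.ext rfl ?_
          show h' • (QuotientGroup.mk 1 : G ⧸ H) = QuotientGroup.mk 1
          rw [MulAction.Quotient.smul_mk]
          exact hmemH i _ (by simpa using hh')
        have e2 := hτ h' (i, QuotientGroup.mk 1)
        rw [e1, factA i] at e2
        have e3 := congrArg Prod.snd e2
        have e4 : (QuotientGroup.mk (gs i) : G ⧸ H) = QuotientGroup.mk (h' * gs i) := by
          have e5 := e3
          rw [slices_smul, MulAction.Quotient.smul_mk, smul_eq_mul] at e5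
          exact e5
        rw [QuotientGroup.eq] at e4
        convert e4 using 1
        group
      have := key (gs i * h * (gs i)⁻¹) hh
      convert this using 1
      group
  let ns : I → (Subgroup.normalizer (H : Set G)) := fun i => ⟨gs i, hnorm i⟩
  let f : I → normQuot H := fun j => (QuotientGroup.mk (ns (σ.symm j)))⁻¹
  refine ⟨⟨f, σ⟩, ?_⟩
  refine Subtype.ext (Equiv.ext fun p => ?_)
  obtain ⟨i, c⟩ := p
  induction c using QuotientGroup.induction_on with
  | H a =>
    show bigPerm H I f σ (i, QuotientGroup.mk a) = τ (i, QuotientGroup.mk a)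
    rw [factA' i a]
    refine Prod.ext rfl ?_
    show rho H (f (σ i)) (QuotientGroup.mk a) = QuotientGroup.mk (a * gs i)
    have hf : f (σ i) = QuotientGroup.mk (ns i)⁻¹ := by
      show (QuotientGroup.mk (ns (σ.symm (σ i))))⁻¹ = _
      rw [Equiv.symm_apply_apply]
      rfl
    rw [hf, rho_mk]
    congr 1
    show a * (((ns i)⁻¹ : (Subgroup.normalizer (H : Set G))) : G)⁻¹ = a * gs i
    simp [ns]
end

def gAutCongr {G Y Z : Type*} [Group G] [MulAction G Y] [MulAction G Z] (e : Y ≃ Z)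
    (he : ∀ (g : G) (y : Y), e (g • y) = g • e y) : gAut G Y ≃* gAut G Z where
  toFun τ := ⟨(e.symm.trans τ).trans e, by
    intro g z
    have hsymm : ∀ (g : G) (z : Z), e.symm (g • z) = g • e.symm z := fun g z =>
      e.injective (by rw [Equiv.apply_symm_apply, he, Equiv.apply_symm_apply])
    show e ((τ : Equiv.Perm Y) (e.symm (g • z))) = g • e ((τ : Equiv.Perm Y) (e.symm z))
    rw [hsymm, τ.2 g, he]⟩
  invFun τ := ⟨(e.trans τ).trans e.symm, by
    intro g y
    have hsymm : ∀ (g : G) (z : Z), e.symm (g • z) = g • e.symm z := fun g z =>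
      e.injective (by rw [Equiv.apply_symm_apply, he, Equiv.apply_symm_apply])
    show e.symm ((τ : Equiv.Perm Z) (e (g • y))) = g • e.symm ((τ : Equiv.Perm Z) (e y))
    rw [he, τ.2 g, hsymm]⟩
  left_inv τ := Subtype.ext (Equiv.ext fun y => by simp)
  right_inv τ := Subtype.ext (Equiv.ext fun z => by simp)
  map_mul' τ₁ τ₂ := Subtype.ext (Equiv.ext fun z => by simp)



/-- For a point stabilizer `H = G_x`, with `B_[H]` the set of points
whose stabilizer is conjugate to `H` and `O_[H]` the set of `G`-orbits inside `B_[H]`,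
`Aut_G(B_[H]) ≅ (N_G(H)/H) ≀ Sym(O_[H])` (unrestricted wreath product, i.e. the
semidirect product of the direct product of copies of `N_G(H)/H` indexed by `O_[H]`
with `Sym(O_[H])` permuting coordinates). -/
theorem stmt7 {G X : Type*} [Group G] [MulAction G X] (x : X) (B : SubMulAction G X)
    (hB : ∀ z : X, z ∈ B ↔
      ∃ g : G, MulAction.stabilizer G z = conjSub g (MulAction.stabilizer G x)) :
    Nonempty ((gAut G ↑B) ≃*
      ((↑(classOrbits G X (MulAction.stabilizer G x)) → normQuot (MulAction.stabilizer G x))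
        ⋊[permCoordAut (normQuot (MulAction.stabilizer G x))
            ↑(classOrbits G X (MulAction.stabilizer G x))]
        Equiv.Perm ↑(classOrbits G X (MulAction.stabilizer G x)))) := by
  set H := MulAction.stabilizer G x with hH
  set O := classOrbits G X H with hO
  -- choose base points with stabilizer exactly H in each orbit
  have key : ∀ o : ↥O, ∃ z : X, MulAction.stabilizer G z = H ∧ (o : Set X) = orbit G z := by
    rintro ⟨s, y, ⟨g, hg⟩, rfl⟩
    refine ⟨g⁻¹ • y, ?_, (MulAction.orbit_smul g⁻¹ y).symm⟩
    rw [MulAction.stabilizer_smul_eq_stabilizer_map_conj]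
    have : Subgroup.map (MulEquiv.toMonoidHom (MulAut.conj g⁻¹)) (stabilizer G y)
        = conjSub g⁻¹ (stabilizer G y) := rfl
    rw [this, hg]
    ext n
    rw [mem_conjSub, mem_conjSub]
    constructor
    · intro hn
      convert hn using 1
      group
    · intro hn
      convert hn using 1
      group
  choose pt hpt1 hpt2 using key
  -- the G-equivariant bijection between O × G/H and B
  have memB : ∀ (o : ↥O) (a : G), a • pt o ∈ B := by
    intro o a
    rw [hB]
    refine ⟨a, ?_⟩
    rw [MulAction.stabilizer_smul_eq_stabilizer_map_conj, hpt1 o]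
    rfl
  let F : (↥O × (G ⧸ H)) → ↥B := fun p =>
    Quotient.liftOn' p.2 (fun a => (⟨a • pt p.1, memB p.1 a⟩ : ↥B)) (fun a b hab => by
      rw [QuotientGroup.leftRel_apply] at hab
      refine Subtype.ext ?_
      show a • pt p.1 = b • pt p.1
      have h1 : (a⁻¹ * b) • pt p.1 = pt p.1 := by
        rw [← hpt1 p.1] at hab
        exact hab
      calc a • pt p.1 = a • ((a⁻¹ * b) • pt p.1) := by rw [h1]
        _ = b • pt p.1 := by rw [← mul_smul]; congr 1; group)
  have hF : ∀ (o : ↥O) (a : G), F (o, QuotientGroup.mk a) = ⟨a • pt o, memB o a⟩ := fun _ _ => rfl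
  have hFbij : Function.Bijective F := by
    constructor
    · rintro ⟨o, c⟩ ⟨o', c'⟩ hpq
      induction c using QuotientGroup.induction_on with
      | H a =>
      induction c' using QuotientGroup.induction_on with
      | H b =>
      rw [hF, hF] at hpq
      have hab : a • pt o = b • pt o' := congrArg Subtype.val hpq
      have ho : o = o' := by
        refine Subtype.ext ?_
        rw [hpt2 o, hpt2 o']
        rw [← MulAction.orbit_smul a (pt o), ← MulAction.orbit_smul b (pt o'), hab]
      subst ho
      refine Prod.ext rfl ?_
      show (QuotientGroup.mk a : G ⧸ H) = QuotientGroup.mk b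
      rw [QuotientGroup.eq]
      rw [← hpt1 o]
      show (a⁻¹ * b) • pt o = pt o
      rw [mul_smul, ← hab, ← mul_smul]
      simp
    · rintro ⟨z, hz⟩
      obtain ⟨g, hg⟩ := (hB z).mp hz
      have hoO : orbit G z ∈ O := ⟨z, ⟨g, hg⟩, rfl⟩
      set o : ↥O := ⟨orbit G z, hoO⟩ with ho
      have hzo : pt o ∈ orbit G z := by
        have := hpt2 o
        simp only [ho] at this
        rw [this]
        exact MulAction.mem_orbit_self _
      obtain ⟨a, ha⟩ := MulAction.mem_orbit_iff.mp hzo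
      refine ⟨(o, QuotientGroup.mk a⁻¹), ?_⟩
      rw [hF]
      refine Subtype.ext ?_
      show a⁻¹ • pt o = z
      rw [← ha, ← mul_smul]
      simp
  let E : (↥O × (G ⧸ H)) ≃ ↥B := Equiv.ofBijective F hFbij
  have hE : ∀ (g : G) (p : ↥O × (G ⧸ H)), E (g • p) = g • E p := by
    intro g p
    obtain ⟨o, c⟩ := p
    induction c using QuotientGroup.induction_on with
    | H a =>
    show F (g • (o, QuotientGroup.mk a)) = g • F (o, QuotientGroup.mk a)
    rw [slices_smul]
    have h1 : g • (QuotientGroup.mk a : G ⧸ H) = QuotientGroup.mk (g * a) := by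
      rw [MulAction.Quotient.smul_mk]; rfl
    show F (o, g • (QuotientGroup.mk a : G ⧸ H)) = _
    rw [h1, hF, hF]
    refine Subtype.ext ?_
    show (g * a) • pt o = g • (a • pt o)
    rw [mul_smul]
  have iso1 := MulEquiv.ofBijective (bigHom H ↥O)
    ⟨bigHom_injective H ↥O, bigHom_surjective H ↥O⟩
  have iso2 := gAutCongr E hE
  exact ⟨iso2.symm.trans iso1.symm⟩
end

section
/- Let G be a finite group acting on a finite set X, and let [H_1], …, [H_r] be the distinct conjugacy classes of point stabilizers, with N_i = N_G(H_i). If a G-equivariant transformation τ ∈ End_G(X) is an elementary collapsing both of type (i, [K]_{N_i}) and of type (i', [K']_{N_{i'}}), then i = i' and [K]_{N_i} = [K']_{N_i}. -/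
/-- The `N`-conjugacy class `[K]_N = {gKg⁻¹ : g ∈ N}` of a subgroup `K`. -/
def nConjClass {G : Type*} [Group G] (N K : Subgroup G) : Set (Subgroup G) :=
  {L | ∃ n ∈ N, L = conjSub n K}

/-- `τ` is an elementary collapsing of type `(i, [K]_{N_i})`, where `Hi = H i`:
there are points `x, y` in distinct orbits with `G_x = Hi`,
`[G_{τ(x)}]_{N_i} = [G_y]_{N_i} = [K]_{N_i}`, and the kernel of `τ` consists of the
pairs `(g•x, g•y)`, `(g•y, g•x)` together with the diagonal. -/
def IsElemCollapsing {G X : Type*} [Group G] [MulAction G X] (Hi K : Subgroup G)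
    (τ : X → X) : Prop :=
  ∃ x y : X, MulAction.orbit G x ≠ MulAction.orbit G y ∧
    MulAction.stabilizer G x = Hi ∧
    nConjClass (Subgroup.normalizer (Hi : Set G)) (MulAction.stabilizer G (τ x)) = nConjClass (Subgroup.normalizer (Hi : Set G)) K ∧
    nConjClass (Subgroup.normalizer (Hi : Set G)) (MulAction.stabilizer G y) = nConjClass (Subgroup.normalizer (Hi : Set G)) K ∧
    {p : X × X | τ p.1 = τ p.2} =
      {p : X × X | ∃ g : G, p = (g • x, g • y) ∨ p = (g • y, g • x)} ∪
        {p : X × X | p.1 = p.2}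

section Aux
variable {G : Type*} [Group G]

lemma conjSub_one (K : Subgroup G) : conjSub 1 K = K := by
  ext x; simp [conjSub]

lemma conjSub_conjSub (a b : G) (K : Subgroup G) :
    conjSub a (conjSub b K) = conjSub (a * b) K := by
  ext x
  simp only [conjSub, Subgroup.mem_map, MulEquiv.coe_toMonoidHom, MulAut.conj_apply]
  constructor
  · rintro ⟨y, ⟨z, hz, rfl⟩, rfl⟩
    exact ⟨z, hz, by group⟩
  · rintro ⟨z, hz, rfl⟩
    exact ⟨b * z * b⁻¹, ⟨z, hz, rfl⟩, by group⟩

lemma conjSub_eq_iff {a : G} {K L : Subgroup G} : conjSub a K = L ↔ K = conjSub a⁻¹ L := by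
  constructor
  · rintro rfl; rw [conjSub_conjSub, inv_mul_cancel, conjSub_one]
  · rintro rfl; rw [conjSub_conjSub, mul_inv_cancel, conjSub_one]

lemma card_conjSub [Finite G] (a : G) (K : Subgroup G) : Nat.card (conjSub a K) = Nat.card K :=
  (Nat.card_congr (Subgroup.equivMapOfInjective K _ (MulAut.conj a).injective).toEquiv).symm

lemma mem_normalizer_of_conjSub_eq {a : G} {K : Subgroup G} (h : conjSub a K = K) :
    a ∈ Subgroup.normalizer (K : Set G) := by
  rw [Subgroup.mem_normalizer_iff]
  intro x
  show x ∈ K ↔ a * x * a⁻¹ ∈ K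
  constructor
  · intro hx; rw [← h]; exact ⟨x, hx, rfl⟩
  · intro hx
    rw [← h] at hx
    obtain ⟨y, hy, hxy⟩ := hx
    simp only [MulEquiv.coe_toMonoidHom, MulAut.conj_apply] at hxy
    have : y = x := mul_left_cancel (mul_right_cancel hxy)
    rwa [← this]

lemma nConjClass_eq_of_mem {N K L : Subgroup G} (n : G) (hn : n ∈ N) (h : L = conjSub n K) :
    nConjClass N L = nConjClass N K := by
  subst h
  ext M
  constructor
  · rintro ⟨m, hm, rfl⟩
    exact ⟨m * n, mul_mem hm hn, conjSub_conjSub m n K⟩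
  · rintro ⟨m, hm, rfl⟩
    refine ⟨m * n⁻¹, mul_mem hm (inv_mem hn), ?_⟩
    rw [conjSub_conjSub, inv_mul_cancel_right]

lemma self_mem_nConjClass (N K : Subgroup G) : K ∈ nConjClass N K :=
  ⟨1, one_mem N, (conjSub_one K).symm⟩

end Aux

/-- The type of an elementary collapsing is well defined: if `τ` is an
elementary collapsing both of type `(i, [K]_{N_i})` and of type `(i', [K']_{N_{i'}})`,
then `i = i'` and `[K]_{N_i} = [K']_{N_i}`. -/
theorem stmt13 {G X : Type*} [Group G] [MulAction G X] [Finite G] [Finite X]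
    (r : ℕ) (H : Fin r → Subgroup G)
    (hH1 : ∀ i, ∃ x : X, MulAction.stabilizer G x = H i)
    (hH2 : ∀ x : X, ∃! i, ∃ g : G, MulAction.stabilizer G x = conjSub g (H i))
    (τ : Function.End X) (hτ : τ ∈ gEnd G X)
    (i i' : Fin r) (K K' : Subgroup G)
    (hK1 : ∃ x : X, MulAction.stabilizer G x = K) (hK2 : H i ≤ K)
    (hK'1 : ∃ x : X, MulAction.stabilizer G x = K') (hK'2 : H i' ≤ K')
    (hc : IsElemCollapsing (H i) K τ) (hc' : IsElemCollapsing (H i') K' τ) :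
    i = i' ∧ nConjClass (Subgroup.normalizer (H i : Set G)) K = nConjClass (Subgroup.normalizer (H i : Set G)) K' := by
  classical
  obtain ⟨x, y, hxy, hx, -, hy, hker⟩ := hc
  obtain ⟨x', y', hxy', hx', -, hy', hker'⟩ := hc'
  have hxyne : x ≠ y := by rintro rfl; exact hxy rfl
  have hτxy : τ x = τ y := by
    have : (x, y) ∈ {p : X × X | τ p.1 = τ p.2} := by
      rw [hker]
      exact Or.inl ⟨1, Or.inl (by simp)⟩
    exact this
  have hmem : (x, y) ∈ ({p : X × X | ∃ g : G, p = (g • x', g • y') ∨ p = (g • y', g • x')} ∪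
      {p : X × X | p.1 = p.2}) := by
    rw [← hker']; exact hτxy
  have key : ∀ (j j' : Fin r) (m : G), H j = conjSub m (H j') → j = j' := by
    intro j j' m hm
    obtain ⟨x₀, hx₀⟩ := hH1 j
    obtain ⟨k, -, hk⟩ := hH2 x₀
    have h1 : j = k := hk j ⟨1, by rw [hx₀, conjSub_one]⟩
    have h2 : j' = k := hk j' ⟨m, by rw [hx₀, hm]⟩
    rw [h1, h2]
  rcases hmem with ⟨g, hg | hg⟩ | hdiag
  · -- x = g • x', y = g • y'
    rw [Prod.ext_iff] at hg
    obtain ⟨hgx, hgy⟩ := hg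
    simp only at hgx hgy
    have e1 : H i = conjSub g (H i') := by
      rw [← hx', ← hx, hgx]
      exact MulAction.stabilizer_smul_eq_stabilizer_map_conj g x'
    have hii' : i = i' := key i i' g e1
    subst hii'
    have hgN : g ∈ (Subgroup.normalizer (H i : Set G)) := mem_normalizer_of_conjSub_eq e1.symm
    have e2 : MulAction.stabilizer G y = conjSub g (MulAction.stabilizer G y') := by
      rw [hgy]
      exact MulAction.stabilizer_smul_eq_stabilizer_map_conj g y'
    exact ⟨rfl, (hy.symm.trans (nConjClass_eq_of_mem g hgN e2)).trans hy'⟩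
  · -- x = g • y', y = g • x'
    rw [Prod.ext_iff] at hg
    obtain ⟨hgx, hgy⟩ := hg
    simp only at hgx hgy
    have e1 : H i = conjSub g (MulAction.stabilizer G y') := by
      rw [← hx, hgx]
      exact MulAction.stabilizer_smul_eq_stabilizer_map_conj g y'
    have e2 : MulAction.stabilizer G y = conjSub g (H i') := by
      rw [← hx', hgy]
      exact MulAction.stabilizer_smul_eq_stabilizer_map_conj g x'
    obtain ⟨n, hnN, hn⟩ : MulAction.stabilizer G y ∈ nConjClass (Subgroup.normalizer (H i : Set G)) K :=
      hy ▸ self_mem_nConjClass (Subgroup.normalizer (H i : Set G)) (MulAction.stabilizer G y)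
    obtain ⟨n', hn'N, hn'⟩ : MulAction.stabilizer G y' ∈ nConjClass (Subgroup.normalizer (H i' : Set G)) K' :=
      hy' ▸ self_mem_nConjClass (Subgroup.normalizer (H i' : Set G)) (MulAction.stabilizer G y')
    have eK : K = conjSub (n⁻¹ * g) (H i') := by
      have : conjSub n K = conjSub g (H i') := hn.symm.trans e2
      rw [conjSub_eq_iff] at this
      rw [this, conjSub_conjSub]
    have eK' : H i = conjSub (g * n') K' := by
      rw [e1, hn', conjSub_conjSub]
    have c1 : Nat.card K = Nat.card (H i') := by rw [eK, card_conjSub]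
    have c2 : Nat.card (H i) = Nat.card K' := by rw [eK', card_conjSub]
    have le1 : Nat.card (H i) ≤ Nat.card K := Subgroup.card_le_of_le hK2
    have le2 : Nat.card (H i') ≤ Nat.card K' := Subgroup.card_le_of_le hK'2
    have hHiK : H i = K :=
      Subgroup.eq_of_le_of_card_ge hK2 (by omega)
    have hHiK' : H i' = K' :=
      Subgroup.eq_of_le_of_card_ge hK'2 (by omega)
    have hii' : i = i' := key i i' (n⁻¹ * g) (by rw [hHiK, eK])
    subst hii'
    refine ⟨rfl, ?_⟩
    rw [← hHiK, ← hHiK']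
  · exact absurd hdiag hxyne
end
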